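/- Under the same two-point probability assumptions and with state space {0,1,...,m} ⊂ ℝ, for i ≠ j, Cov(X_i, X_j) = Σ_{k=1}^m k^2 p_k c_k |i-j|^{2H_k-2}. -/

import Mathlib

open Finset MeasureTheory

lemma aux_int {Ω : Type*} [MeasurableSpace Ω] (μ : Measure Ω) [IsProbabilityMeasure μ]
    (m : ℕ) (g : Ω → ℕ) (hg : Measurable g) (hr : ∀ ω, g ω ≤ m) :
    ∫ ω, (g ω : ℝ) ∂μ = ∑ k ∈ range (m + 1), (k : ℝ) * (μ {ω | g ω = k}).toReal := by
  have hpt : ∀ ω, (g ω : ℝ) = ∑ k ∈ range (m + 1),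
      Set.indicator {ω | g ω = k} (fun _ => (k : ℝ)) ω := by
    intro ω
    rw [Finset.sum_eq_single (g ω)]
    · simp [Set.indicator_apply, Set.mem_setOf_eq]
    · intro k _ hk
      exact Set.indicator_of_notMem (fun h => hk (Set.mem_setOf_eq ▸ h).symm) _
    · intro h; exact absurd (Finset.mem_range.2 (Nat.lt_succ_of_le (hr ω))) h
  have hmeas : ∀ k : ℕ, MeasurableSet {ω | g ω = k} := fun k =>
    hg (measurableSet_singleton k)
  calc ∫ ω, (g ω : ℝ) ∂μ
      = ∫ ω, ∑ k ∈ range (m + 1),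
          Set.indicator {ω | g ω = k} (fun _ => (k : ℝ)) ω ∂μ := by simp_rw [← hpt]
    _ = ∑ k ∈ range (m + 1),
          ∫ ω, Set.indicator {ω | g ω = k} (fun _ => (k : ℝ)) ω ∂μ := by
        apply integral_finset_sum
        intro k _
        exact (integrable_const _).indicator (hmeas k)
    _ = _ := by
        refine Finset.sum_congr rfl fun k _ => ?_
        rw [integral_indicator_const _ (hmeas k)]
        simp [mul_comm, Measure.real]

lemma aux_int2 {Ω : Type*} [MeasurableSpace Ω] (μ : Measure Ω) [IsProbabilityMeasure μ]
    (m : ℕ) (f g : Ω → ℕ) (hf : Measurable f) (hg : Measurable g)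
    (hrf : ∀ ω, f ω ≤ m) (hrg : ∀ ω, g ω ≤ m) :
    ∫ ω, (f ω : ℝ) * (g ω : ℝ) ∂μ = ∑ k ∈ range (m + 1), ∑ k' ∈ range (m + 1),
      (k : ℝ) * (k' : ℝ) * (μ {ω | f ω = k ∧ g ω = k'}).toReal := by
  have hms : ∀ k k' : ℕ, MeasurableSet {ω | f ω = k ∧ g ω = k'} := fun k k' =>
    (hf (measurableSet_singleton k)).inter (hg (measurableSet_singleton k'))
  have hpt : ∀ ω, (f ω : ℝ) * (g ω : ℝ) = ∑ k ∈ range (m + 1), ∑ k' ∈ range (m + 1),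
      Set.indicator {ω | f ω = k ∧ g ω = k'} (fun _ => (k : ℝ) * (k' : ℝ)) ω := by
    intro ω
    have key : ∀ k k', Set.indicator {ω | f ω = k ∧ g ω = k'}
        (fun _ => (k : ℝ) * (k' : ℝ)) ω
        = (if f ω = k then (k : ℝ) else 0) * (if g ω = k' then (k' : ℝ) else 0) := by
      intro k k'
      by_cases h1 : f ω = k <;> by_cases h2 : g ω = k' <;>
        simp [Set.indicator_apply, Set.mem_setOf_eq, h1, h2]
    simp_rw [key]
    rw [← Finset.sum_mul_sum]
    rw [Finset.sum_ite_eq, Finset.sum_ite_eq]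
    simp [Finset.mem_range, Nat.lt_succ_of_le (hrf ω), Nat.lt_succ_of_le (hrg ω)]
  calc ∫ ω, (f ω : ℝ) * (g ω : ℝ) ∂μ
      = ∫ ω, ∑ k ∈ range (m + 1), ∑ k' ∈ range (m + 1),
          Set.indicator {ω | f ω = k ∧ g ω = k'} (fun _ => (k : ℝ) * (k' : ℝ)) ω ∂μ := by
        simp_rw [← hpt]
    _ = ∑ k ∈ range (m + 1), ∑ k' ∈ range (m + 1),
          ∫ ω, Set.indicator {ω | f ω = k ∧ g ω = k'}
            (fun _ => (k : ℝ) * (k' : ℝ)) ω ∂μ := by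
        rw [integral_finset_sum]
        · refine Finset.sum_congr rfl fun k _ => ?_
          exact integral_finset_sum _ fun k' _ =>
            (integrable_const _).indicator (hms k k')
        · exact fun k _ => integrable_finset_sum _ fun k' _ =>
            (integrable_const _).indicator (hms k k')
    _ = _ := by
        refine Finset.sum_congr rfl fun k _ => Finset.sum_congr rfl fun k' _ => ?_
        rw [integral_indicator_const _ (hms k k')]
        simp [mul_comm, Measure.real]

/-- Cov(X_i, X_j) = Σ_{k=1}^m k² p_k c_k |i-j|^{2H_k-2} for i ≠ j, where
Cov(X_i, X_j) = E[X_i X_j] - E[X_i] E[X_j]. -/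
theorem stmt_11 {Ω : Type*} [MeasurableSpace Ω] (μ : Measure Ω) [IsProbabilityMeasure μ]
    (m : ℕ) (hm : 1 ≤ m) (X : ℕ → Ω → ℕ) (p c H : ℕ → ℝ)
    (hmeas : ∀ i, Measurable (X i))
    (hrange : ∀ i ω, X i ω ≤ m)
    (hsum : ∑ k ∈ Finset.range (m + 1), p k = 1)
    (hp : ∀ i k, k ≤ m → (μ {ω | X i ω = k}).toReal = p k)
    (h2 : ∀ i j k, i ≠ j → 1 ≤ k → k ≤ m →
      (μ {ω | X i ω = k ∧ X j ω = k}).toReal =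
        p k * (p k + c k * |(i : ℝ) - (j : ℝ)| ^ (2 * H k - 2)))
    (h3 : ∀ i j k k', i ≠ j → 1 ≤ k → k ≤ m → 1 ≤ k' → k' ≤ m → k ≠ k' →
      (μ {ω | X i ω = k ∧ X j ω = k'}).toReal = p k * p k')
    (i j : ℕ) (hij : i ≠ j) :
    (∫ ω, (X i ω : ℝ) * (X j ω : ℝ) ∂μ) -
        (∫ ω, (X i ω : ℝ) ∂μ) * (∫ ω, (X j ω : ℝ) ∂μ) =
      ∑ k ∈ Finset.Icc 1 m,
        (k : ℝ) ^ 2 * p k * c k * |(i : ℝ) - (j : ℝ)| ^ (2 * H k - 2) := by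
  set r : ℕ → ℝ := fun k => |(i : ℝ) - (j : ℝ)| ^ (2 * H k - 2) with hr
  have hsub : Finset.Icc 1 m ⊆ Finset.range (m + 1) := by
    intro k hk
    exact Finset.mem_range.2 (Nat.lt_succ_of_le (Finset.mem_Icc.1 hk).2)
  have hzero : ∀ k ∈ range (m + 1), k ∉ Finset.Icc 1 m → k = 0 := by
    intro k hk hk'
    rcases Nat.eq_zero_or_pos k with h | h
    · exact h
    · exact absurd (Finset.mem_Icc.2 ⟨h, Nat.lt_succ_iff.1 (Finset.mem_range.1 hk)⟩) hk'
  -- single integrals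
  have hE : ∀ l, ∫ ω, (X l ω : ℝ) ∂μ = ∑ k ∈ Finset.Icc 1 m, (k : ℝ) * p k := by
    intro l
    rw [aux_int μ m (X l) (hmeas l) (hrange l)]
    rw [← Finset.sum_subset hsub (fun k hk hk' => by simp [hzero k hk hk'])]
    refine Finset.sum_congr rfl fun k hk => ?_
    rw [hp l k (Finset.mem_Icc.1 hk).2]
  -- product integral
  have hE2 : ∫ ω, (X i ω : ℝ) * (X j ω : ℝ) ∂μ =
      (∑ k ∈ Finset.Icc 1 m, (k : ℝ) * p k) * (∑ k ∈ Finset.Icc 1 m, (k : ℝ) * p k)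
      + ∑ k ∈ Finset.Icc 1 m, (k : ℝ) ^ 2 * p k * c k * r k := by
    rw [aux_int2 μ m (X i) (X j) (hmeas i) (hmeas j) (hrange i) (hrange j)]
    rw [← Finset.sum_subset hsub (fun k hk hk' => by simp [hzero k hk hk'])]
    have inner : ∀ k ∈ Finset.Icc 1 m,
        ∑ k' ∈ range (m + 1), (k : ℝ) * (k' : ℝ) * (μ {ω | X i ω = k ∧ X j ω = k'}).toReal
        = ∑ k' ∈ Finset.Icc 1 m, ((k : ℝ) * (k' : ℝ) * (p k * p k')
            + if k = k' then (k : ℝ) ^ 2 * p k * c k * r k else 0) := by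
      intro k hk
      obtain ⟨hk1, hk2⟩ := Finset.mem_Icc.1 hk
      rw [← Finset.sum_subset hsub (fun k' hk' hk'' => by simp [hzero k' hk' hk''])]
      refine Finset.sum_congr rfl fun k' hk' => ?_
      obtain ⟨hk1', hk2'⟩ := Finset.mem_Icc.1 hk'
      by_cases h : k = k'
      · subst h
        rw [h2 i j k hij hk1 hk2, if_pos rfl]
        simp only [hr]
        ring
      · rw [h3 i j k k' hij hk1 hk2 hk1' hk2' h, if_neg h]
        ring
    rw [Finset.sum_congr rfl inner]
    rw [Finset.sum_mul_sum]
    rw [← Finset.sum_add_distrib]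
    refine Finset.sum_congr rfl fun k hk => ?_
    rw [Finset.sum_add_distrib, Finset.sum_ite_eq _ k (fun k' => (k : ℝ) ^ 2 * p k * c k * r k), if_pos hk]
    congr 1
    refine Finset.sum_congr rfl fun k' _ => by ring
  rw [hE2, hE i, hE j]
  ring
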